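/- For the program P = { f X → Y X } with FS = {f/1, g/1} and CS = {0/0, 1/0, c/1} containing a unary constructor c, the denotations ⟦f 0⟧^P and ⟦f 1⟧^P differ: c 0 ∈ ⟦f 0⟧^P and c 1 ∈ ⟦f 1⟧^P, but c 0 ∉ ⟦f 1⟧^P (i.e. adding a constructor of arity 1 makes the Example 2 counterexample to the hypothesis of full abstraction disappear). -/

import Mathlib

/-- A signature: function symbols and constructor symbols, each with an arity. -/
structure Sig where
  FS : Type
  CS : Type
  arityF : FS → ℕ
  arityC : CS → ℕ

/-- Applicative partial expressions over a signature.  Variables are natural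
numbers and `bot` is the distinguished 0-ary constructor `⊥`. -/
inductive Exp (σ : Sig) : Type where
  | var : ℕ → Exp σ
  | fn : σ.FS → Exp σ
  | cn : σ.CS → Exp σ
  | bot : Exp σ
  | app : Exp σ → Exp σ → Exp σ

variable {σ : Sig}

/-- `applyList e [e1, …, en]` is the curried application `e e1 … en`. -/
def applyList (e : Exp σ) (es : List (Exp σ)) : Exp σ := es.foldl Exp.app e

/-- Partial patterns `Pat_⊥`. -/
inductive IsPPat : Exp σ → Prop where
  | var (x : ℕ) : IsPPat (Exp.var x)
  | bot : IsPPat (Exp.bot : Exp σ)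
  | capp (c : σ.CS) (ts : List (Exp σ)) (har : ts.length ≤ σ.arityC c)
      (hts : ∀ t ∈ ts, IsPPat t) : IsPPat (applyList (Exp.cn c) ts)
  | fapp (f : σ.FS) (ts : List (Exp σ)) (har : ts.length < σ.arityF f)
      (hts : ∀ t ∈ ts, IsPPat t) : IsPPat (applyList (Exp.fn f) ts)

/-- The constructor `⊥` does not occur in the expression. -/
def BotFree : Exp σ → Prop
  | .bot => False
  | .app a b => BotFree a ∧ BotFree b
  | _ => True

/-- Total patterns `Pat`. -/
def IsPat (t : Exp σ) : Prop := IsPPat t ∧ BotFree t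

/-- First-order patterns `FOPat`. -/
inductive IsFOPat : Exp σ → Prop where
  | var (x : ℕ) : IsFOPat (Exp.var x)
  | capp (c : σ.CS) (ts : List (Exp σ)) (har : ts.length = σ.arityC c)
      (hts : ∀ t ∈ ts, IsFOPat t) : IsFOPat (applyList (Exp.cn c) ts)

/-- The list of occurrences of variables in an expression. -/
def occVars : Exp σ → List ℕ
  | .var x => [x]
  | .app a b => occVars a ++ occVars b
  | _ => []

/-- Applying a substitution to an expression. -/
def subst (θ : ℕ → Exp σ) : Exp σ → Exp σ
  | .var x => θ x
  | .fn f => .fn f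
  | .cn c => .cn c
  | .bot => .bot
  | .app a b => .app (subst θ a) (subst θ b)

/-- Partial-pattern substitutions `PSubst_⊥`. -/
def PSub (θ : ℕ → Exp σ) : Prop := ∀ x, IsPPat (θ x)

/-- A program rule `f t1 … tn → r` (the left-hand side is `f` applied to `lhs`). -/
structure Rule (σ : Sig) where
  fn : σ.FS
  lhs : List (Exp σ)
  rhs : Exp σ

/-- Well-formedness of a rule: `f` is applied to as many arguments as its arity,
the arguments form a linear tuple of total patterns. -/
def Rule.WF (r : Rule σ) : Prop :=
  r.lhs.length = σ.arityF r.fn ∧ (∀ t ∈ r.lhs, IsPat t) ∧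
    (r.lhs.flatMap occVars).Nodup

/-- The rule has no extra variables: all variables of the right-hand side occur
in the left-hand side. -/
def Rule.NoExtra (r : Rule σ) : Prop :=
  ∀ x ∈ occVars r.rhs, x ∈ r.lhs.flatMap occVars

abbrev Program (σ : Sig) := Set (Rule σ)

/-- A program without extra variables, all whose rules are well formed. -/
def WFProg (P : Program σ) : Prop := ∀ r ∈ P, r.WF ∧ r.NoExtra

/-- `h ∈ Σ` (a function symbol, a constructor symbol, or `⊥`). -/
def IsSymb : Exp σ → Prop
  | .fn _ => True
  | .cn _ => True
  | .bot => True
  | _ => False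

/-- HOCRWL derivation trees for statements `e ⇒ t`, with rules
(B), (RR), (DC) and (OR). -/
inductive DTree (P : Program σ) : Exp σ → Exp σ → Type where
  | bot (e : Exp σ) : DTree P e Exp.bot
  | rr (x : ℕ) : DTree P (Exp.var x) (Exp.var x)
  | dc (h : Exp σ) (es ts : List (Exp σ)) (hsym : IsSymb h)
      (hlen : es.length = ts.length) (hpat : IsPPat (applyList h ts))
      (ds : ∀ p ∈ es.zip ts, DTree P p.1 p.2) :
      DTree P (applyList h es) (applyList h ts)
  | opr (r : Rule σ) (hr : r ∈ P) (θ : ℕ → Exp σ) (hθ : PSub θ)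
      (es as : List (Exp σ)) (t : Exp σ) (hlen : es.length = r.lhs.length)
      (ds : ∀ p ∈ es.zip (r.lhs.map (subst θ)), DTree P p.1 p.2)
      (d : DTree P (applyList (subst θ r.rhs) as) t) :
      DTree P (applyList (Exp.fn r.fn) (es ++ as)) t

/-- `P ⊢ e ⇒ t` is derivable in the HOCRWL proof calculus. -/
def Deriv (P : Program σ) (e t : Exp σ) : Prop := Nonempty (DTree P e t)

/-- The HOCRWL denotation `⟦e⟧^P = { t ∈ Pat_⊥ | P ⊢ e ⇒ t }`. -/
def den (P : Program σ) (e : Exp σ) : Set (Exp σ) := {t | IsPPat t ∧ Deriv P e t}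

/-- Observations: total patterns in the denotation. -/
def Obs (P : Program σ) (e : Exp σ) : Set (Exp σ) := {t | t ∈ den P e ∧ BotFree t}

/-- First-order observations: first-order patterns in the denotation. -/
def ObsFO (P : Program σ) (e : Exp σ) : Set (Exp σ) := {t | t ∈ den P e ∧ IsFOPat t}

/-- Contexts `C ::= [ ] | C e | e C`. -/
inductive Cntxt (σ : Sig) : Type where
  | hole : Cntxt σ
  | appL : Cntxt σ → Exp σ → Cntxt σ
  | appR : Exp σ → Cntxt σ → Cntxt σ

/-- Filling the hole of a context with an expression. -/
def Cntxt.fill : Cntxt σ → Exp σ → Exp σ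
  | .hole, e => e
  | .appL C e', e => .app (C.fill e) e'
  | .appR e' C, e => .app e' (C.fill e)

/-- Function symbols occurring in an expression. -/
def expFS : Exp σ → Set σ.FS
  | .fn f => {f}
  | .app a b => expFS a ∪ expFS b
  | _ => ∅

/-- Function symbols occurring in a rule. -/
def ruleFS (r : Rule σ) : Set σ.FS :=
  insert r.fn ((⋃ t ∈ r.lhs, expFS t) ∪ expFS r.rhs)

/-- Function symbols occurring in a program. -/
def progFS (P : Program σ) : Set σ.FS := ⋃ r ∈ P, ruleFS r

/-- Function symbols defined by a program (roots of left-hand sides). -/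
def defs (P : Program σ) : Set σ.FS := Rule.fn '' P

/-- `P'` is a safe extension of `(P, e)`: `P' = P ⊎ P''` where `P''` defines no
function symbol occurring in `P` or in `e`. -/
def SafeExt (P P' : Program σ) (e : Exp σ) : Prop :=
  ∃ P'' : Program σ, P' = P ∪ P'' ∧ Disjoint P P'' ∧
    Disjoint (defs P'') (expFS e ∪ progFS P)

/-- `e ∼ₙ e'` : `n`-extensional equivalence. -/
def ExtEquiv (P : Program σ) (n : ℕ) (e e' : Exp σ) : Prop :=
  ∀ es : List (Exp σ), es.length = n →
    den P (applyList e es) = den P (applyList e' es)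

/-- Function symbols: `f/1`, `g/1`. -/
inductive Ex4F where | f | g

/-- Constructor symbols: `0/0`, `1/0` and a unary constructor `c/1`. -/
inductive Ex4C where | c0 | c1 | cu

/-- The signature with the added unary constructor `c`. -/
def ex4Sig : Sig where
  FS := Ex4F
  CS := Ex4C
  arityF := fun s => match s with | .f => 1 | .g => 1
  arityC := fun s => match s with | .c0 => 0 | .c1 => 0 | .cu => 1

/-- The program `P = { f X → Y X }` (extra variable `Y`). -/
def ex4Prog : Program ex4Sig :=
  {⟨.f, [.var 0], .app (.var 1) (.var 0)⟩}

/-! ### Auxiliary lemmas -/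

lemma applyList_cases' {σ : Sig} (h : Exp σ) (l : List (Exp σ)) :
    (l = [] ∧ applyList h l = h) ∨
    ∃ l' x, l = l' ++ [x] ∧ applyList h l = .app (applyList h l') x := by
  rcases l.eq_nil_or_concat with rfl | ⟨l', x, rfl⟩
  · exact Or.inl ⟨rfl, rfl⟩
  · exact Or.inr ⟨l', x, by simp, by simp [applyList]⟩

lemma applyList_cons_isApp {σ : Sig} :
    ∀ (l : List (Exp σ)) (h x : Exp σ), ∃ a b, applyList h (x :: l) = .app a b := by
  intro l
  induction l with
  | nil => exact fun h x => ⟨h, x, rfl⟩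
  | cons y l ih => exact fun h x => ih (.app h x) y

lemma ppat_app_aux : ∀ {e : Exp ex4Sig}, IsPPat e → ∀ a b, e = .app a b →
    a = .cn .cu ∧ IsPPat b := by
  intro e h
  cases h with
  | var x => intro a b hab; simp at hab
  | bot => intro a b hab; simp at hab
  | capp c ts har hts =>
    intro a b hab
    rcases applyList_cases' (Exp.cn c) ts with ⟨rfl, h2⟩ | ⟨l', x, rfl, h2⟩
    · rw [h2] at hab; simp at hab
    · rw [h2] at hab
      injection hab with h1 h3
      cases c with
      | cu =>
        have hl : l' = [] := by
          have hlen : (l' ++ [x]).length = l'.length + 1 := by simp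
          rw [hlen] at har; exact List.eq_nil_of_length_eq_zero (by simpa [ex4Sig] using har)
        subst hl
        exact ⟨h1.symm, h3 ▸ hts x (by simp)⟩
      | c0 =>
        have hlen : (l' ++ [x]).length = l'.length + 1 := by simp
        rw [hlen] at har; simp [ex4Sig] at har
      | c1 =>
        have hlen : (l' ++ [x]).length = l'.length + 1 := by simp
        rw [hlen] at har; simp [ex4Sig] at har
  | fapp f ts har hts =>
    intro a b hab
    rcases applyList_cases' (Exp.fn f) ts with ⟨rfl, h2⟩ | ⟨l', x, rfl, h2⟩
    · rw [h2] at hab; simp at hab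
    · have hlen : (l' ++ [x]).length = l'.length + 1 := by simp
      rw [hlen] at har; cases f <;> simp [ex4Sig] at har

lemma not_ppat_fn_cons :
    ∀ (l : List (Exp ex4Sig)) (g : Ex4F) (x : Exp ex4Sig),
      ¬ IsPPat (applyList (.fn g) (x :: l)) := by
  intro l
  induction l using List.reverseRecOn with
  | nil =>
    intro g x h
    exact absurd (ppat_app_aux h (.fn g) x rfl).1 (by simp)
  | append_singleton l' y ih =>
    intro g x h
    have he : applyList (.fn g : Exp ex4Sig) (x :: (l' ++ [y])) =
        .app (applyList (.fn g) (x :: l')) y := by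
      have : x :: (l' ++ [y]) = (x :: l') ++ [y] := by simp
      rw [this]; simp [applyList]
    have h2 := ppat_app_aux h _ _ he
    obtain ⟨a', b', hab⟩ := applyList_cons_isApp l' (.fn g) x
    rw [hab] at h2
    simp at h2

lemma ex4_key : ∀ {e t : Exp ex4Sig}, DTree ex4Prog e t →
    (e = .bot → t = .bot) ∧
    (e = .cn .c1 → t = .bot ∨ t = .cn .c1) ∧
    (∀ p q, e = .app p q → IsPPat p → (q = .bot ∨ q = .cn .c1) →
      t = .bot ∨ ∃ s, t = .app (.cn .cu) s ∧ (s = .bot ∨ s = .cn .c1)) := by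
  intro e t d
  induction d with
  | bot e => exact ⟨fun _ => rfl, fun _ => Or.inl rfl, fun _ _ _ _ _ => Or.inl rfl⟩
  | rr x =>
    refine ⟨?_, ?_, ?_⟩ <;> intros <;> simp_all
  | dc h es ts hsym hlen hpat ds ih =>
    refine ⟨?_, ?_, ?_⟩
    · intro he
      rcases applyList_cases' h es with ⟨rfl, h2⟩ | ⟨l', x, rfl, h2⟩
      · have hts : ts = [] := List.eq_nil_of_length_eq_zero (by simpa using hlen.symm)
        subst hts
        exact he
      · rw [h2] at he; simp at he
    · intro he
      rcases applyList_cases' h es with ⟨rfl, h2⟩ | ⟨l', x, rfl, h2⟩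
      · have hts : ts = [] := List.eq_nil_of_length_eq_zero (by simpa using hlen.symm)
        subst hts
        exact Or.inr he
      · rw [h2] at he; simp at he
    · intro p q he hp hq
      rcases applyList_cases' h es with ⟨rfl, h2⟩ | ⟨es', q', rfl, h2⟩
      · rw [h2] at he; rw [he] at hsym; exact hsym.elim
      · rw [h2] at he
        injection he with he1 he2
        subst he2
        rcases applyList_cases' h ts with ⟨rfl, _⟩ | ⟨ts', b, rfl, h3⟩
        · simp at hlen
        · have hlen' : es'.length = ts'.length := by simpa using hlen
          have hmem : (q', b) ∈ (es' ++ [q']).zip (ts' ++ [b]) := by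
            rw [List.zip_append hlen']; simp
          have ihb := ih _ hmem
          rw [h3] at hpat
          obtain ⟨hcu, _⟩ := ppat_app_aux hpat _ _ rfl
          have hb : b = .bot ∨ b = .cn .c1 := by
            rcases hq with h' | h'
            · exact Or.inl (ihb.1 h')
            · exact ihb.2.1 h'
          exact Or.inr ⟨b, by rw [h3, hcu], hb⟩
  | opr r hr θ hθ es as t hlen ds d ih_ds ih_d =>
    simp only [ex4Prog, Set.mem_singleton_iff] at hr
    subst hr
    obtain ⟨e0, rfl⟩ := List.length_eq_one_iff.mp (by simpa using hlen)
    refine ⟨?_, ?_, ?_⟩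
    · intro he
      obtain ⟨a, b, hab⟩ := applyList_cons_isApp as (.fn Ex4F.f) e0
      simp only [List.cons_append, List.nil_append] at he
      rw [hab] at he; simp at he
    · intro he
      obtain ⟨a, b, hab⟩ := applyList_cons_isApp as (.fn Ex4F.f) e0
      simp only [List.cons_append, List.nil_append] at he
      rw [hab] at he; simp at he
    · intro p q he hp hq
      rcases as.eq_nil_or_concat with rfl | ⟨as', y, rfl⟩
      · simp only [List.cons_append, List.nil_append] at he
        have he' : (Exp.app (.fn Ex4F.f) e0 : Exp ex4Sig) = .app p q := he
        injection he' with he1 he2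
        have hmem : (e0, θ 0) ∈ [e0].zip ([Exp.var 0].map (subst θ)) := by
          simp [subst]
        have h0 := ih_ds _ hmem
        have hθ0 : θ 0 = .bot ∨ θ 0 = .cn .c1 := by
          rcases hq with h' | h'
          · exact Or.inl (h0.1 (he2.trans h'))
          · exact h0.2.1 (he2.trans h')
        exact ih_d.2.2 (θ 1) (θ 0) rfl (hθ 1) hθ0
      · simp only [List.concat_eq_append, List.cons_append, List.nil_append] at he
        have hll : e0 :: (as' ++ [y]) = (e0 :: as') ++ [y] := by simp
        rw [hll] at he
        have he2 : applyList (.fn Ex4F.f : Exp ex4Sig) ((e0 :: as') ++ [y]) =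
            .app (applyList (.fn Ex4F.f) (e0 :: as')) y := by simp [applyList]
        rw [he2] at he
        injection he with he1 he3
        exact absurd (he1 ▸ hp) (not_ppat_fn_cons as' Ex4F.f e0)

lemma ppat_cn (c : Ex4C) : IsPPat (.cn c : Exp ex4Sig) := by
  have := IsPPat.capp (σ := ex4Sig) c [] (Nat.zero_le _) (by simp)
  simpa [applyList] using this

lemma ppat_fn (g : Ex4F) : IsPPat (.fn g : Exp ex4Sig) := by
  have := IsPPat.fapp (σ := ex4Sig) g [] (by cases g <;> simp [ex4Sig]) (by simp)
  simpa [applyList] using this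

lemma ppat_cu_app {b : Exp ex4Sig} (h : IsPPat b) :
    IsPPat (Exp.app (Exp.cn Ex4C.cu) b) := by
  have := IsPPat.capp (σ := ex4Sig) Ex4C.cu [b] (Nat.le_refl 1) (by simpa)
  simpa [applyList] using this

def dtree_cn (c : Ex4C) : DTree ex4Prog (.cn c) (.cn c) := by
  exact DTree.dc (P := ex4Prog) (Exp.cn c) [] [] trivial rfl (ppat_cn c)
    (fun p hp => absurd hp (by simp))

def dtree_cu (c : Ex4C) :
    DTree ex4Prog (.app (.cn .cu) (.cn c)) (.app (.cn .cu) (.cn c)) := by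
  exact DTree.dc (P := ex4Prog) (Exp.cn Ex4C.cu) [Exp.cn c] [Exp.cn c] trivial rfl
    (ppat_cu_app (ppat_cn c))
    (by
      intro p hp
      simp only [List.zip_cons_cons, List.zip_nil_right, List.mem_singleton] at hp
      subst hp
      exact dtree_cn c)

def ex4Rule : Rule ex4Sig := ⟨.f, [.var 0], .app (.var 1) (.var 0)⟩

def ex4θ (c : Ex4C) : ℕ → Exp ex4Sig :=
  fun n => match n with
  | 0 => .cn c
  | 1 => .cn .cu
  | _ => .bot

lemma ex4θ_psub (c : Ex4C) : PSub (ex4θ c) := by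
  intro x
  match x with
  | 0 => exact ppat_cn c
  | 1 => exact ppat_cn .cu
  | (n+2) => exact IsPPat.bot

lemma ex4Rule_mem : ex4Rule ∈ ex4Prog := rfl

def dtree_f (c : Ex4C) :
    DTree ex4Prog (.app (.fn .f) (.cn c)) (.app (.cn .cu) (.cn c)) := by
  exact DTree.opr (P := ex4Prog) ex4Rule ex4Rule_mem (ex4θ c) (ex4θ_psub c)
    [Exp.cn c] [] (Exp.app (Exp.cn Ex4C.cu) (Exp.cn c)) rfl
    (by
      intro p hp
      simp only [ex4Rule, List.map_cons, List.map_nil, List.zip_cons_cons,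
        List.zip_nil_right, List.mem_singleton] at hp
      subst hp
      exact dtree_cn c)
    (dtree_cu c)

/-- With a unary constructor `c` in the signature, the denotations `⟦f 0⟧^P`
and `⟦f 1⟧^P` differ: `c 0 ∈ ⟦f 0⟧^P` and `c 1 ∈ ⟦f 1⟧^P`, but
`c 0 ∉ ⟦f 1⟧^P` (the Example 2 counterexample to the hypothesis of full
abstraction disappears). -/
theorem ex4_den_differ :
    ((Exp.app (.cn .cu) (.cn .c0) : Exp ex4Sig) ∈ den ex4Prog (.app (.fn .f) (.cn .c0))) ∧
    ((Exp.app (.cn .cu) (.cn .c1) : Exp ex4Sig) ∈ den ex4Prog (.app (.fn .f) (.cn .c1))) ∧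
    ((Exp.app (.cn .cu) (.cn .c0) : Exp ex4Sig) ∉ den ex4Prog (.app (.fn .f) (.cn .c1))) ∧
    den ex4Prog (.app (.fn .f) (.cn .c0)) ≠
      den ex4Prog (.app (.fn .f) (.cn .c1)) := by
  have mem0 : (Exp.app (.cn .cu) (.cn .c0) : Exp ex4Sig) ∈
      den ex4Prog (.app (.fn .f) (.cn .c0)) :=
    ⟨ppat_cu_app (ppat_cn .c0), ⟨dtree_f .c0⟩⟩
  have mem1 : (Exp.app (.cn .cu) (.cn .c1) : Exp ex4Sig) ∈
      den ex4Prog (.app (.fn .f) (.cn .c1)) :=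
    ⟨ppat_cu_app (ppat_cn .c1), ⟨dtree_f .c1⟩⟩
  have nmem : (Exp.app (.cn .cu) (.cn .c0) : Exp ex4Sig) ∉
      den ex4Prog (.app (.fn .f) (.cn .c1)) := by
    rintro ⟨-, ⟨d⟩⟩
    have h := (ex4_key d).2.2 (.fn .f) (.cn .c1) rfl (ppat_fn .f) (Or.inr rfl)
    rcases h with h | ⟨s, hs, hsmall⟩
    · simp at h
    · injection hs with h1 h2
      rcases hsmall with h' | h' <;> rw [h'] at h2 <;> first | simp at h2 | exact absurd h2 (by decide) | cases h2
  refine ⟨mem0, mem1, nmem, fun h => nmem (h ▸ mem0)⟩
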